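/- Assume the hypotheses (R1), (R2), (R3) on ψ, φ, the lift χ̄ of χ, and the homomorphism χ̂ : Γ → Ĝ/N⊥ with ⟨χ̂(a), n⟩ = φ(a, n, 0)⁻¹, and define ψ̂ and φ̂ as in the dual-cocycle construction: ψ̂(a, b, ẑ) := ψ(a, b, 0) · φ(b, χ̄(a), 0)⁻¹ · ⟨χ̂(ba) + ẑ, χ̄(ba) − χ̄(a) − χ̄(b)⟩ and φ̂(a, ĝ, ẑ) := ⟨ĝ, χ̄(a)⟩⁻¹. Let χ̂̄ : Γ → Ĝ be any lift of χ̂ (π̂ ∘ χ̂̄ = χ̂). Then: (a) for all a ∈ Γ, n⊥ ∈ N⊥ and ẑ ∈ Ĝ/N⊥ one has φ̂(a, n⊥, ẑ)⁻¹ = ⟨n⊥, χ(a)⟩, i.e. the double-dual base homomorphism equals χ; (b) defining ψ̂̂(a, b, z) := ψ̂(a, b, 0) · φ̂(b, χ̂̄(a), 0)⁻¹ · ⟨χ̂̄(ba) − χ̂̄(a) − χ̂̄(b), χ(ba) + z⟩ for z ∈ G/N (note χ̂̄(ba) − χ̂̄(a) − χ̂̄(b) ∈ N⊥) and φ̂̂(a,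 g, z) := ⟨χ̂̄(a), g⟩⁻¹, there exists a function ν₁ : Γ × G/N → U(1) such that for all a, b ∈ Γ, g ∈ G, z ∈ G/N: ψ̂̂(a, b, z) = ψ(a, b, z) · ν₁(b, z + χ(a)) · ν₁(ba, z)⁻¹ · ν₁(a, z) and φ̂̂(a, g, z) = φ(a, g, z) · ν₁(a, z + π(g)) · ν₁(a, z)⁻¹. -/

import Mathlib

/-- With the setup of the duality construction (hypotheses (R1), (R2), (R3) on `(ψ, φ)`, a lift
`χ̄` of `χ`, the dual homomorphism `χ̂` with `⟨χ̂(a), n⟩ = φ(a,n,0)⁻¹`, and the dual data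
`ψ̂, φ̂`), and a lift `χ̂̄ : Γ → Ĝ` of `χ̂`:
(a) the double-dual base homomorphism equals `χ`:
    `φ̂(a, n⊥, ẑ)⁻¹ = ⟨n⊥, χ(a)⟩` for `n⊥ ∈ N⊥`; and
(b) the double-dual data `ψ̂̂, φ̂̂` differ from `ψ, φ` by the total coboundary of some
    `ν₁ : Γ × G/N → U(1)`. -/
theorem statement4
    {Γ : Type*} [Group Γ] [Finite Γ]
    {G : Type*} [AddCommGroup G] [TopologicalSpace G] [IsTopologicalAddGroup G]
      [LocallyCompactSpace G] [SecondCountableTopology G] [T2Space G]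
    (N : AddSubgroup G) [DiscreteTopology N] [CompactSpace (G ⧸ N)]
    -- the Pontryagin dual of `G`, abstracted by its pairing with `G`
    {Ghat : Type*} [AddCommGroup Ghat]
    (e : Ghat → G → Circle)
    (he₁ : ∀ (x y : Ghat) (g : G), e (x + y) g = e x g * e y g)
    (he₂ : ∀ (x : Ghat) (g h : G), e x (g + h) = e x g * e x h)
    -- the annihilator `N⊥` of `N`
    (Nperp : AddSubgroup Ghat)
    (hNperp : ∀ x : Ghat, x ∈ Nperp ↔ ∀ n ∈ N, e x (n : G) = 1)
    -- the well-defined pairing of `Ĝ/N⊥` with `N`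
    (eQN : Ghat ⧸ Nperp → N → Circle)
    (heQN : ∀ (x : Ghat) (n : N), eQN (x : Ghat ⧸ Nperp) n = e x (n : G))
    -- the well-defined pairing of `N⊥` with `G/N`
    (ePQ : Nperp → G ⧸ N → Circle)
    (hePQ : ∀ (p : Nperp) (g : G), ePQ p ((g : G) : G ⧸ N) = e (p : Ghat) g)
    -- the base homomorphism `χ` and its dual `χ̂`
    (χ : Γ → G ⧸ N) (hχ : ∀ a b : Γ, χ (a * b) = χ a + χ b)
    (χhat : Γ → Ghat ⧸ Nperp) (hχhat : ∀ a b : Γ, χhat (a * b) = χhat a + χhat b)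
    -- the cocycle data `(ψ, φ, 1)` of a dualisable dynamical triple
    (ψ : Γ → Γ → (G ⧸ N) → Circle) (φ : Γ → G → (G ⧸ N) → Circle)
    (R1 : ∀ (a b c : Γ) (z : G ⧸ N),
      ψ b c (z + χ a) * (ψ (b * a) c z)⁻¹ * ψ a (c * b) z * (ψ a b z)⁻¹ = 1)
    (R2 : ∀ (a b : Γ) (g : G) (z : G ⧸ N),
      φ b g (z + χ a) * (φ (b * a) g z)⁻¹ * φ a g z = ψ a b (z + (g : G ⧸ N)) * (ψ a b z)⁻¹)
    (R3 : ∀ (a : Γ) (g h : G) (z : G ⧸ N),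
      φ a (g + h) z = φ a h (z + (g : G ⧸ N)) * φ a g z)
    (hpair : ∀ (a : Γ) (n : N), eQN (χhat a) n = (φ a (n : G) 0)⁻¹)
    -- a lift `χ̄` of `χ`
    (χbar : Γ → G) (hχbar : ∀ a : Γ, ((χbar a : G) : G ⧸ N) = χ a)
    (hη : ∀ a b : Γ, χbar (b * a) - χbar a - χbar b ∈ N)
    -- the dual cocycle data `ψ̂` and `φ̂`
    (ψhat : Γ → Γ → (Ghat ⧸ Nperp) → Circle)
    (hψhat : ∀ (a b : Γ) (zh : Ghat ⧸ Nperp),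
      ψhat a b zh = ψ a b 0 * (φ b (χbar a) 0)⁻¹ *
        eQN (χhat (b * a) + zh) ⟨χbar (b * a) - χbar a - χbar b, hη a b⟩)
    (φhat : Γ → Ghat → (Ghat ⧸ Nperp) → Circle)
    (hφhat : ∀ (a : Γ) (gh : Ghat) (zh : Ghat ⧸ Nperp), φhat a gh zh = (e gh (χbar a))⁻¹)
    -- a lift `χ̂̄` of `χ̂`
    (χhatbar : Γ → Ghat) (hχhatbar : ∀ a : Γ, ((χhatbar a : Ghat) : Ghat ⧸ Nperp) = χhat a)
    (hηhat : ∀ a b : Γ, χhatbar (b * a) - χhatbar a - χhatbar b ∈ Nperp)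
    -- the double-dual cocycle data `ψ̂̂` and `φ̂̂`
    (ψhathat : Γ → Γ → (G ⧸ N) → Circle)
    (hψhathat : ∀ (a b : Γ) (z : G ⧸ N),
      ψhathat a b z = ψhat a b 0 * (φhat b (χhatbar a) 0)⁻¹ *
        ePQ ⟨χhatbar (b * a) - χhatbar a - χhatbar b, hηhat a b⟩ (χ (b * a) + z))
    (φhathat : Γ → G → (G ⧸ N) → Circle)
    (hφhathat : ∀ (a : Γ) (g : G) (z : G ⧸ N), φhathat a g z = (e (χhatbar a) g)⁻¹) :
    -- (a) the double-dual base homomorphism is `χ`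
    (∀ (a : Γ) (p : Nperp) (zh : Ghat ⧸ Nperp), (φhat a (p : Ghat) zh)⁻¹ = ePQ p (χ a)) ∧
    -- (b) `(ψ̂̂, φ̂̂, 1)` differs from `(ψ, φ, 1)` by a total coboundary `∂_χ(ν₁, 1)`
    (∃ ν₁ : Γ → (G ⧸ N) → Circle,
      ∀ (a b : Γ) (g : G) (z : G ⧸ N),
        ψhathat a b z = ψ a b z * (ν₁ b (z + χ a) * (ν₁ (b * a) z)⁻¹ * ν₁ a z) ∧
        φhathat a g z = φ a g z * (ν₁ a (z + (g : G ⧸ N)) * (ν₁ a z)⁻¹)) := by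
  have he_subg : ∀ (x : Ghat) (u v : G), e x (u - v) = e x u * (e x v)⁻¹ := by
    intro x u v
    have h := he₂ x (u - v) v
    rw [sub_add_cancel] at h
    exact eq_mul_inv_iff_mul_eq.mpr h.symm
  have he_subx : ∀ (x y : Ghat) (g : G), e (x - y) g = e x g * (e y g)⁻¹ := by
    intro x y g
    have h := he₁ (x - y) y g
    rw [sub_add_cancel] at h
    exact eq_mul_inv_iff_mul_eq.mpr h.symm
  have μconst : ∀ (c : Γ) (n : G), n ∈ N → ∀ w : G ⧸ N, φ c n w = φ c n 0 := by
    intro c n hn w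
    have key : ∀ (h : G) (w0 : G ⧸ N), φ c n (w0 + (h : G ⧸ N)) = φ c n w0 := by
      intro h w0
      have h1 := R3 c h n w0
      have h2 := R3 c n h w0
      rw [(QuotientAddGroup.eq_zero_iff n).mpr hn, add_zero] at h2
      rw [add_comm h n, h2, mul_comm (φ c h w0) (φ c n w0)] at h1
      exact (mul_right_cancel h1).symm
    have h := key w.out 0
    rw [zero_add, QuotientAddGroup.out_eq'] at h
    exact h
  have F2 : ∀ (c : Γ) (n : G) (hn : n ∈ N), e (χhatbar c) n = (φ c n 0)⁻¹ := by
    intro c n hn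
    have h : eQN ((χhatbar c : Ghat) : Ghat ⧸ Nperp) ⟨n, hn⟩ = e (χhatbar c) n :=
      heQN (χhatbar c) ⟨n, hn⟩
    rw [hχhatbar c, hpair c ⟨n, hn⟩] at h
    exact h.symm
  have μadd : ∀ (x y : Γ) (n : G), n ∈ N → φ (y * x) n 0 = φ y n 0 * φ x n 0 := by
    intro x y n hn
    have h := R2 x y n 0
    rw [(QuotientAddGroup.eq_zero_iff n).mpr hn, add_zero, zero_add,
      μconst y n hn (χ x), mul_inv_cancel] at h
    symm
    rw [← mul_inv_eq_one, mul_right_comm]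
    exact h
  constructor
  · intro a p zh
    rw [hφhat, inv_inv, ← hχbar a, hePQ]
  · refine ⟨fun c w => (φ c w.out 0 * e (χhatbar c) w.out * e (χhatbar c) (χbar c))⁻¹,
      fun a b g z => ⟨?_, ?_⟩⟩
    · -- the ψ equation
      beta_reduce
      obtain ⟨m, hmN, hmeq⟩ : ∃ m ∈ N, (z + χ a).out = z.out + (χbar a + m) := by
        refine ⟨(z + χ a).out - z.out - χbar a, ?_, by abel⟩
        rw [← QuotientAddGroup.eq_zero_iff, QuotientAddGroup.mk_sub, QuotientAddGroup.mk_sub,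
          QuotientAddGroup.out_eq', QuotientAddGroup.out_eq', hχbar]
        abel
      have hψz : ψ a b z = φ b z.out (χ a) * (φ (b * a) z.out 0)⁻¹ * φ a z.out 0 * ψ a b 0 := by
        have h := R2 a b z.out 0
        rw [zero_add, zero_add, QuotientAddGroup.out_eq'] at h
        rw [h, inv_mul_cancel_right]
      have key1 := R3 b (χbar a) z.out 0
      have key2 := R3 b z.out (χbar a) 0
      rw [zero_add, hχbar a] at key1
      rw [zero_add, QuotientAddGroup.out_eq'] at key2
      rw [add_comm (χbar a) z.out] at key1
      have hφbAz : φ b (χbar a) z = φ b z.out (χ a) * φ b (χbar a) 0 * (φ b z.out 0)⁻¹ := by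
        rw [eq_mul_inv_iff_mul_eq]
        exact (key1.symm.trans key2).symm
      have hQN : eQN (χhat (b * a)) ⟨χbar (b * a) - χbar a - χbar b, hη a b⟩
          = e (χhatbar (b * a)) (χbar (b * a) - χbar a - χbar b) := by
        rw [← hχhatbar (b * a)]; exact heQN _ _
      have hPQ : ePQ ⟨χhatbar (b * a) - χhatbar a - χhatbar b, hηhat a b⟩ (χ (b * a) + z)
          = e (χhatbar (b * a) - χhatbar a - χhatbar b) (χbar (b * a))
            * e (χhatbar (b * a) - χhatbar a - χhatbar b) z.out := by
        have h1 : χ (b * a) + z = ((χbar (b * a) + z.out : G) : G ⧸ N) := by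
          rw [QuotientAddGroup.mk_add, QuotientAddGroup.out_eq', hχbar]
        rw [h1, hePQ, he₂]
      have hΔC : e (χhatbar (b * a) - χhatbar a - χhatbar b) (χbar (b * a))
          = e (χhatbar (b * a)) (χbar (b * a)) * (e (χhatbar a) (χbar (b * a)))⁻¹
            * (e (χhatbar b) (χbar (b * a)))⁻¹ := by
        rw [he_subx, he_subx]
      have hΔS : e (χhatbar (b * a) - χhatbar a - χhatbar b) z.out
          = e (χhatbar (b * a)) z.out * (e (χhatbar a) z.out)⁻¹
            * (e (χhatbar b) z.out)⁻¹ := by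
        rw [he_subx, he_subx]
      have hXC : ∀ c : Γ, e (χhatbar c) (χbar (b * a))
          = (φ c (χbar (b * a) - χbar a - χbar b) 0)⁻¹ * e (χhatbar c) (χbar a)
            * e (χhatbar c) (χbar b) := by
        intro c
        have h1 : e (χhatbar c) (χbar (b * a) - χbar a - χbar b)
            = e (χhatbar c) (χbar (b * a)) * (e (χhatbar c) (χbar a))⁻¹
              * (e (χhatbar c) (χbar b))⁻¹ := by
          rw [he_subg, he_subg]
        rw [← F2 c _ (hη a b), h1]
        apply Additive.ofMul.injective
        simp only [ofMul_mul, ofMul_inv]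
        abel
      rw [hψhathat, hψhat, hφhat, add_zero, hQN, hPQ]
      simp only [inv_inv]
      rw [hmeq, R3 b z.out (χbar a + m) 0, zero_add, QuotientAddGroup.out_eq',
        R3 b (χbar a) m z, hχbar a, μconst b m hmN (z + χ a),
        he₂ (χhatbar b) z.out (χbar a + m), he₂ (χhatbar b) (χbar a) m, F2 b m hmN,
        hφbAz, hψz, hΔC, hΔS, hXC a, hXC b, hXC (b * a),
        F2 (b * a) _ (hη a b), μadd a b _ (hη a b)]
      apply Additive.ofMul.injective
      simp only [ofMul_mul, ofMul_inv]
      abel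
    · -- the φ equation
      beta_reduce
      obtain ⟨n, hnN, hneq⟩ : ∃ n ∈ N, (z + ((g : G) : G ⧸ N)).out = z.out + (g + n) := by
        refine ⟨(z + ((g : G) : G ⧸ N)).out - z.out - g, ?_, by abel⟩
        rw [← QuotientAddGroup.eq_zero_iff, QuotientAddGroup.mk_sub, QuotientAddGroup.mk_sub,
          QuotientAddGroup.out_eq', QuotientAddGroup.out_eq']
        abel
      rw [hφhathat, hneq, R3 a z.out (g + n) 0, zero_add, QuotientAddGroup.out_eq',
        R3 a g n z, μconst a n hnN (z + ((g : G) : G ⧸ N)),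
        he₂ (χhatbar a) z.out (g + n), he₂ (χhatbar a) g n, F2 a n hnN]
      apply Additive.ofMul.injective
      simp only [ofMul_mul, ofMul_inv]
      abel
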